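/- Let A : [0,∞) → ℂ be Lipschitz with constant 1, A(0) = 0, and suppose A is differentiable a.e. with derivative a satisfying a(t) ≥ 1 − 2·log(4√e·t) for all t in [1/(4√e), 1/(2√e)) and a(t) = 1 for t < 1/(4√e), where a(t) is continuous on this range and satisfies t·a(t) = ∫₀ᵗ a(u) du − ∫₀^{t−1/(4√e)} (1 − b(t−u)) du with 0 ≤ 1 − b ≤ 2. Then if equality a(1/4) = 1 − 2·log(4√e·(1/4)) holds at t = 1/4, one must have b(t) = −1 for almost every t ∈ (1/(4√e), 1/4]. -/

import Mathlib

open MeasureTheory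

set_option maxHeartbeats 1000000 in
theorem stmt_10 (A : ℝ → ℂ) (a b : ℝ → ℝ)
    (hA_lip : LipschitzOnWith 1 A (Set.Ici 0)) (hA0 : A 0 = 0)
    (ha_bd : ∀ t : ℝ, |a t| ≤ 1) (hb_bd : ∀ t : ℝ, |b t| ≤ 1)
    (hderiv : ∀ᵐ t : ℝ ∂volume, 0 < t → HasDerivAt A ((a t : ℂ)) t)
    (h1 : ∀ t ∈ Set.Ico (1 / (4 * Real.sqrt (Real.exp 1)))
        (1 / (2 * Real.sqrt (Real.exp 1))),
        a t ≥ 1 - 2 * Real.log (4 * Real.sqrt (Real.exp 1) * t))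
    (h2 : ∀ t : ℝ, 0 ≤ t → t < 1 / (4 * Real.sqrt (Real.exp 1)) → a t = 1)
    (hcont : ContinuousOn a (Set.Ico (1 / (4 * Real.sqrt (Real.exp 1)))
        (1 / (2 * Real.sqrt (Real.exp 1)))))
    (heq : ∀ t ∈ Set.Ico (1 / (4 * Real.sqrt (Real.exp 1)))
        (1 / (2 * Real.sqrt (Real.exp 1))),
        t * a t = (∫ u in (0 : ℝ)..t, a u)
          - ∫ u in (0 : ℝ)..(t - 1 / (4 * Real.sqrt (Real.exp 1))), (1 - b (t - u)))
    (hb_rng : ∀ t : ℝ, 0 ≤ 1 - b t ∧ 1 - b t ≤ 2)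
    (hEq14 : a (1 / 4) = 1 - 2 * Real.log (4 * Real.sqrt (Real.exp 1) * (1 / 4))) :
    ∀ᵐ t : ℝ ∂volume,
      t ∈ Set.Ioc (1 / (4 * Real.sqrt (Real.exp 1))) (1 / 4) → b t = -1 := by
  set s : ℝ := Real.sqrt (Real.exp 1) with hs_def
  have hsq : s ^ 2 = Real.exp 1 := Real.sq_sqrt (Real.exp_pos 1).le
  have hs_nonneg : 0 ≤ s := Real.sqrt_nonneg _
  have hs1 : 1 < s := by nlinarith [Real.exp_one_gt_d9]
  have hs2 : s < 2 := by nlinarith [Real.exp_one_lt_d9]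
  have hs0 : 0 < s := by linarith
  set c : ℝ := 1 / (4 * s) with hc_def
  have hc_pos : 0 < c := by positivity
  have hc14 : c < 1 / 4 := by
    rw [hc_def]
    rw [div_lt_div_iff₀ (by positivity) (by norm_num)]
    nlinarith
  have h142c : (1 / 4 : ℝ) < 1 / (2 * s) := by
    rw [div_lt_div_iff₀ (by norm_num) (by positivity)]
    nlinarith
  have hlogs : Real.log s = 1 / 2 := by
    rw [hs_def, Real.log_sqrt (Real.exp_pos 1).le, Real.log_exp]
  have hlog4s : Real.log (4 * s) = Real.log 4 + 1 / 2 := by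
    rw [Real.log_mul (by norm_num) (ne_of_gt hs0), hlogs]
  have hmem : (1 / 4 : ℝ) ∈ Set.Ico c (1 / (2 * s)) := ⟨hc14.le, h142c⟩
  have ha14 : a (1 / 4) = 0 := by
    have h4s : 4 * s * (1 / 4) = s := by ring
    rw [hEq14, h4s, hlogs]; norm_num
  -- a.e. x ≠ c
  have hne : ∀ᵐ x : ℝ ∂volume, x ≠ c := by
    rw [ae_iff]
    have : {x : ℝ | ¬x ≠ c} = {c} := by ext x; simp
    rw [this]
    exact measure_singleton c
  -- integrability of a on [0, c]
  have int1 : IntervalIntegrable a volume 0 c := by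
    rw [intervalIntegrable_iff]
    have hfin : volume (Set.uIoc (0:ℝ) c) < ⊤ := by
      rw [Set.uIoc_of_le hc_pos.le]; exact measure_Ioc_lt_top
    apply (show IntegrableOn (fun _ => (1:ℝ)) (Set.uIoc 0 c) volume from
      MeasureTheory.integrableOn_const hfin.ne).congr
    rw [Filter.EventuallyEq, ae_restrict_iff' measurableSet_uIoc]
    filter_upwards [hne] with x hx hxI
    rw [Set.uIoc_of_le hc_pos.le] at hxI
    exact (h2 x hxI.1.le (lt_of_le_of_ne hxI.2 hx)).symm
  -- integral of a on [0, c] equals c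
  have h0c : (∫ u in (0 : ℝ)..c, a u) = c := by
    have heq1 : (∫ u in (0 : ℝ)..c, a u) = ∫ u in (0 : ℝ)..c, (1 : ℝ) := by
      apply intervalIntegral.integral_congr_ae
      filter_upwards [hne] with x hx hxI
      rw [Set.uIoc_of_le hc_pos.le] at hxI
      exact h2 x hxI.1.le (lt_of_le_of_ne hxI.2 hx)
    rw [heq1]; simp
  -- integrability of a on [c, 1/4]
  have int2 : IntervalIntegrable a volume c (1 / 4) := by
    apply ContinuousOn.intervalIntegrable
    apply hcont.mono
    rw [Set.uIcc_of_le hc14.le]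
    intro x hx
    exact ⟨hx.1, lt_of_le_of_lt hx.2 h142c⟩
  -- lower bound on integral of a over [c, 1/4]
  have hgcont : ContinuousOn (fun u : ℝ => 1 - 2 * Real.log (4 * s * u))
      (Set.uIcc c (1 / 4)) := by
    rw [Set.uIcc_of_le hc14.le]
    apply ContinuousOn.sub continuousOn_const
    apply ContinuousOn.mul continuousOn_const
    apply Real.continuousOn_log.comp (Continuous.continuousOn (by continuity))
    intro x hx
    have hx0 : 0 < x := lt_of_lt_of_le hc_pos hx.1
    simp only [Set.mem_compl_iff, Set.mem_singleton_iff]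
    positivity
  have intg : IntervalIntegrable (fun u : ℝ => 1 - 2 * Real.log (4 * s * u))
      volume c (1 / 4) := hgcont.intervalIntegrable
  have hIg : (∫ u in c..(1 / 4 : ℝ), (1 - 2 * Real.log (4 * s * u))) = 1 / 2 - 3 * c := by
    have hsplit : ∀ u ∈ Set.uIcc c (1 / 4 : ℝ),
        (1 - 2 * Real.log (4 * s * u)) = (1 - 2 * Real.log (4 * s)) - 2 * Real.log u := by
      intro u hu
      rw [Set.uIcc_of_le hc14.le] at hu
      have hu0 : 0 < u := lt_of_lt_of_le hc_pos hu.1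
      rw [Real.log_mul (by positivity) (ne_of_gt hu0)]
      ring
    rw [intervalIntegral.integral_congr hsplit]
    have hnotmem : (0 : ℝ) ∉ Set.uIcc c (1 / 4 : ℝ) := by
      rw [Set.uIcc_of_le hc14.le]
      intro h
      exact absurd h.1 (not_le.2 hc_pos)
    rw [intervalIntegral.integral_sub intervalIntegrable_const
      ((intervalIntegral.intervalIntegrable_log hnotmem).const_mul 2)]
    rw [intervalIntegral.integral_const_mul, integral_log,
      intervalIntegral.integral_const, smul_eq_mul]
    have hlogc : Real.log c = -(Real.log 4 + 1 / 2) := by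
      rw [hc_def, one_div, Real.log_inv, hlog4s]
    have hlog14 : Real.log (1 / 4 : ℝ) = -Real.log 4 := by
      rw [one_div, Real.log_inv]
    rw [hlogc, hlog14, hlog4s]
    ring
  have hmono : (1 / 2 - 3 * c : ℝ) ≤ ∫ u in c..(1 / 4 : ℝ), a u := by
    rw [← hIg]
    apply intervalIntegral.integral_mono_on hc14.le intg int2
    intro x hx
    exact h1 x ⟨hx.1, lt_of_le_of_lt hx.2 h142c⟩
  -- main identity from heq at t = 1/4
  have hmain : (∫ u in c..(1 / 4 : ℝ), (1 - b u)) = c + ∫ u in c..(1 / 4 : ℝ), a u := by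
    have H := heq (1 / 4) hmem
    rw [ha14, mul_zero] at H
    have hcomp : (∫ u in (0 : ℝ)..(1 / 4 - c), (1 - b (1 / 4 - u)))
        = ∫ u in c..(1 / 4 : ℝ), (1 - b u) := by
      have := intervalIntegral.integral_comp_sub_left (a := 0) (b := 1 / 4 - c)
        (fun u => 1 - b u) (1 / 4)
      simpa using this
    have hsplitI : (∫ u in (0 : ℝ)..(1 / 4 : ℝ), a u)
        = c + ∫ u in c..(1 / 4 : ℝ), a u := by
      rw [← intervalIntegral.integral_add_adjacent_intervals int1 int2, h0c]
    rw [hcomp, hsplitI] at H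
    linarith
  by_cases hInt : IntervalIntegrable (fun u => 1 - b u) volume c (1 / 4)
  · have hIb_le : (∫ u in c..(1 / 4 : ℝ), (1 - b u)) ≤ 2 * (1 / 4 - c) := by
      calc (∫ u in c..(1 / 4 : ℝ), (1 - b u)) ≤ ∫ _u in c..(1 / 4 : ℝ), (2 : ℝ) := by
            apply intervalIntegral.integral_mono_on hc14.le hInt intervalIntegrable_const
            intro x _
            exact (hb_rng x).2
        _ = 2 * (1 / 4 - c) := by rw [intervalIntegral.integral_const, smul_eq_mul]; ring
    have hzero' : (∫ u in c..(1 / 4 : ℝ), (2 - (1 - b u))) = 0 := by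
      rw [intervalIntegral.integral_sub intervalIntegrable_const hInt,
        intervalIntegral.integral_const, smul_eq_mul]
      linarith
    have hzero : (∫ u in Set.Ioc c (1 / 4 : ℝ), (2 - (1 - b u)) ∂volume) = 0 := by
      rwa [intervalIntegral.integral_of_le hc14.le] at hzero'
    have hint2 : IntegrableOn (fun u => 2 - (1 - b u)) (Set.Ioc c (1 / 4 : ℝ)) volume :=
      ((intervalIntegrable_const (c := (2 : ℝ))).sub hInt).1
    have hae := (integral_eq_zero_iff_of_nonneg_ae
      (Filter.Eventually.of_forall fun x => by
        show (0:ℝ) ≤ 2 - (1 - b x); linarith [(hb_rng x).2]) hint2).1 hzero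
    rw [Filter.EventuallyEq, ae_restrict_iff' measurableSet_Ioc] at hae
    filter_upwards [hae] with t ht htmem
    have h0 := ht htmem
    simp only [Pi.zero_apply] at h0
    linarith
  · exfalso
    have h0 : (∫ u in c..(1 / 4 : ℝ), (1 - b u)) = 0 :=
      intervalIntegral.integral_undef hInt
    linarith
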